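/- Let R be a commutative ring and let 0 → M' → M → L → 0 be a short exact sequence of R-modules that is split, with L free of rank 1. Then for every i ≥ 1 there is an exact sequence 0 → Λ^i M' → Λ^i M → L ⊗_R Λ^{i−1} M' → 0, where the surjection sends m₁ ∧ ... ∧ m_i to Σ_j (−1)^{i−j} π(m_j) ⊗ (m₁ ∧ ... ∧ m̂_j ∧ ... ∧ m_i) computed via a splitting (and is independent of the choice of splitting). -/

import Mathlib

open scoped TensorProduct

/-- The canonical `n`-fold wedge `v₁ ∧ ... ∧ v_n`, as an element of the `n`-th exterior
power submodule. -/
noncomputable def wedge (R : Type*) [CommRing R] {M : Type*} [AddCommGroup M] [Module R M]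
    (n : ℕ) (v : Fin n → M) : ⋀[R]^n M :=
  ⟨ExteriorAlgebra.ιMulti R n v, ExteriorAlgebra.ιMulti_range R n (Set.mem_range_self _)⟩

/-- The map `Λ^n M → Λ^n N` induced by a linear map `f : M → N`. -/
noncomputable def extPowerMap {R : Type*} [CommRing R] {M N : Type*} [AddCommGroup M]
    [Module R M] [AddCommGroup N] [Module R N] (n : ℕ) (f : M →ₗ[R] N) :
    ⋀[R]^n M →ₗ[R] ⋀[R]^n N :=
  (ExteriorAlgebra.map f).toLinearMap.restrict (p := ⋀[R]^n M) (q := ⋀[R]^n N)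
    (by
      intro x hx
      have h1 : Submodule.map (ExteriorAlgebra.map f).toLinearMap
            ((LinearMap.range (ExteriorAlgebra.ι R (M := M))) ^ n)
          ≤ (LinearMap.range (ExteriorAlgebra.ι R (M := N))) ^ n := by
        rw [Submodule.map_pow]
        refine pow_le_pow_left' ?_ n
        rintro y ⟨z, hz, rfl⟩
        obtain ⟨w, rfl⟩ := hz
        exact ⟨f w, by simp⟩
      exact h1 ⟨x, hx, rfl⟩)

namespace Stmt11Aux

variable {R : Type*} [CommRing R] {M : Type*} [AddCommGroup M] [Module R M]

/-- Contraction on the exterior algebra. -/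
noncomputable abbrev ctr (φ : Module.Dual R M) :
    ExteriorAlgebra R M →ₗ[R] ExteriorAlgebra R M :=
  CliffordAlgebra.contractLeft φ

lemma ctr_ι (φ : Module.Dual R M) (w : M) :
    ctr φ (ExteriorAlgebra.ι R w) = algebraMap R _ (φ w) :=
  CliffordAlgebra.contractLeft_ι _ _ _

lemma ctr_ι_mul (φ : Module.Dual R M) (w : M) (x : ExteriorAlgebra R M) :
    ctr φ (ExteriorAlgebra.ι R w * x) = φ w • x - ExteriorAlgebra.ι R w * ctr φ x :=
  CliffordAlgebra.contractLeft_ι_mul φ w x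

lemma ctr_algebraMap (φ : Module.Dual R M) (r : R) :
    ctr φ (algebraMap R (ExteriorAlgebra R M) r) = 0 :=
  CliffordAlgebra.contractLeft_algebraMap _ _ _

lemma ctr_one (φ : Module.Dual R M) : ctr φ (1 : ExteriorAlgebra R M) = 0 := by
  simpa using ctr_algebraMap φ 1

/-- Contraction of an `n+1`-fold wedge. -/
lemma ctr_ιMulti (φ : Module.Dual R M) (n : ℕ) (v : Fin (n + 1) → M) :
    ctr φ (ExteriorAlgebra.ιMulti R (n + 1) v) =
      ∑ j : Fin (n + 1), ((-1 : ℤ) ^ (j : ℕ)) •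
        (φ (v j) • ExteriorAlgebra.ιMulti R n (fun l => v (j.succAbove l))) := by
  induction n with
  | zero =>
      rw [ExteriorAlgebra.ιMulti_succ_apply, ExteriorAlgebra.ιMulti_zero_apply, mul_one, ctr_ι]
      simp [Algebra.algebraMap_eq_smul_one]
  | succ n ih =>
      rw [ExteriorAlgebra.ιMulti_succ_apply, ctr_ι_mul, Fin.sum_univ_succ, ih]
      have h0 : (fun l => v ((0 : Fin (n + 2)).succAbove l)) = Matrix.vecTail v := by
        funext l; simp [Matrix.vecTail, Fin.zero_succAbove]
      rw [h0]
      simp only [pow_zero, one_smul, Fin.val_zero]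
      rw [Finset.mul_sum, sub_eq_add_neg, ← Finset.sum_neg_distrib]
      congr 1
      refine Finset.sum_congr rfl fun k _ => ?_
      have hm : ExteriorAlgebra.ιMulti R (n + 1) (fun l => v ((k.succ).succAbove l))
          = ExteriorAlgebra.ι R (v 0) *
            ExteriorAlgebra.ιMulti R n (fun l => Matrix.vecTail v (k.succAbove l)) := by
        have harg : Matrix.vecTail (fun l => v ((k.succ).succAbove l))
            = fun l => Matrix.vecTail v (k.succAbove l) := by
          funext l
          simp [Matrix.vecTail, Function.comp]
        have hhead : v ((k.succ).succAbove 0) = v 0 := congrArg v (Fin.succ_succAbove_zero k)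
        rw [ExteriorAlgebra.ιMulti_succ_apply, harg, hhead]
      rw [hm, mul_smul_comm, mul_smul_comm]
      have hvt : Matrix.vecTail v k = v k.succ := rfl
      rw [hvt, Fin.val_succ, pow_succ, mul_comm ((-1 : ℤ) ^ (k : ℕ)) (-1), mul_smul]
      simp

/-- Contraction lowers the exterior degree. -/
lemma ctr_mem (φ : Module.Dual R M) (n : ℕ) :
    ∀ x ∈ ⋀[R]^(n + 1) M, ctr φ x ∈ ⋀[R]^n M := by
  induction n with
  | zero =>
      intro x hx
      have hx' : x ∈ LinearMap.range (ExteriorAlgebra.ι R (M := M)) ^ (0 + 1) := hx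
      rw [pow_one] at hx'
      obtain ⟨w, rfl⟩ := hx'
      rw [ctr_ι]
      show _ ∈ LinearMap.range (ExteriorAlgebra.ι R (M := M)) ^ 0
      rw [pow_zero]
      exact Submodule.algebraMap_mem _
  | succ n ih =>
      intro x hx
      have hx' : x ∈ LinearMap.range (ExteriorAlgebra.ι R (M := M)) *
          LinearMap.range (ExteriorAlgebra.ι R (M := M)) ^ (n + 1) := by
        rw [← pow_succ']; exact hx
      refine Submodule.mul_induction_on hx' ?_ ?_
      · rintro a ⟨w, rfl⟩ y hy
        rw [ctr_ι_mul]
        refine Submodule.sub_mem _ (Submodule.smul_mem _ _ hy) ?_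
        have h2 : ctr φ y ∈ ⋀[R]^n M := ih y hy
        show _ ∈ LinearMap.range (ExteriorAlgebra.ι R (M := M)) ^ (n + 1)
        rw [pow_succ']
        exact Submodule.mul_mem_mul ⟨w, rfl⟩ h2
      · intro a b ha hb
        rw [map_add]
        exact Submodule.add_mem _ ha hb

/-- Expansion of an alternating map applied to `a + c • e`. -/
lemma alt_expand {N : Type*} [AddCommGroup N] [Module R N] {n : ℕ}
    (A : M [⋀^Fin n]→ₗ[R] N) (a : Fin n → M) (c : Fin n → R) (e : M) :
    A (fun i => a i + c i • e) =
      A a + ∑ j : Fin n, c j • A (Function.update a j e) := by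
  classical
  have h := A.toMultilinearMap.map_add_univ a (fun i => c i • e)
  have h' : A (fun i => a i + c i • e)
      = ∑ s : Finset (Fin n), A (s.piecewise a fun i => c i • e) := h
  rw [h']
  have hzero : ∀ s : Finset (Fin n), 2 ≤ sᶜ.card →
      A (s.piecewise a fun i => c i • e) = 0 := by
    intro s hs
    obtain ⟨j, hj, k, hk, hjk⟩ := Finset.one_lt_card.mp hs
    rw [Finset.mem_compl] at hj hk
    set t : Fin n → M := s.piecewise a fun i => c i • e with ht
    have htj : t j = c j • e := Finset.piecewise_eq_of_notMem _ _ _ hj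
    have htk : t k = c k • e := Finset.piecewise_eq_of_notMem _ _ _ hk
    have e1 : A t = c j • A (Function.update t j e) := by
      conv_lhs => rw [← Function.update_eq_self j t, htj]
      exact A.map_update_smul t j (c j) e
    have e2 : A (Function.update t j e)
        = c k • A (Function.update (Function.update t j e) k e) := by
      conv_lhs => rw [← Function.update_eq_self k (Function.update t j e),
        Function.update_of_ne hjk.symm, htk]
      exact A.map_update_smul _ k (c k) e
    have e3 : A (Function.update (Function.update t j e) k e) = 0 := by
      refine A.map_eq_zero_of_eq _ (i := j) (j := k) ?_ hjk
      rw [Function.update_of_ne hjk, Function.update_self, Function.update_self]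
    rw [e1, e2, e3, smul_zero, smul_zero]
  classical
  set T : Finset (Finset (Fin n)) :=
    insert Finset.univ (Finset.univ.image fun j : Fin n => Finset.univ.erase j) with hT
  have hsub : ∀ s : Finset (Fin n), s ∉ T →
      A (s.piecewise a fun i => c i • e) = 0 := by
    intro s hsT
    refine hzero s ?_
    by_contra hlt
    push_neg at hlt
    have hcases : sᶜ.card = 0 ∨ sᶜ.card = 1 := by omega
    rcases hcases with h | h
    · rw [Finset.card_eq_zero] at h
      have hs : s = Finset.univ := by
        rw [← compl_compl s, h, Finset.compl_empty]
      refine hsT ?_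
      rw [hs, hT]
      exact Finset.mem_insert_self _ _
    · rw [Finset.card_eq_one] at h
      obtain ⟨j, hj⟩ := h
      have hs : s = Finset.univ.erase j := by
        rw [← compl_compl s, hj, Finset.compl_singleton]
      refine hsT ?_
      rw [hs, hT]
      exact Finset.mem_insert_of_mem (Finset.mem_image_of_mem _ (Finset.mem_univ j))
  rw [← Finset.sum_subset (Finset.subset_univ T) (fun s _ hs => hsub s hs)]
  rw [hT, Finset.sum_insert, Finset.sum_image]
  · rw [Finset.piecewise_univ]
    congr 1
    refine Finset.sum_congr rfl fun j _ => ?_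
    rw [Finset.piecewise_erase_univ]
    exact A.map_update_smul a j (c j) e
  · intro j _ k _ hjk
    by_contra hne
    have hjmem : j ∈ Finset.univ.erase k := Finset.mem_erase.mpr ⟨hne, Finset.mem_univ j⟩
    rw [← show Finset.univ.erase j = Finset.univ.erase k from hjk] at hjmem
    exact (Finset.mem_erase.mp hjmem).1 rfl
  · intro hmem
    obtain ⟨j, _, hj⟩ := Finset.mem_image.mp hmem
    have : j ∈ Finset.univ.erase j := hj.symm ▸ Finset.mem_univ j
    exact (Finset.mem_erase.mp this).1 rfl

end Stmt11Aux

namespace Stmt11Aux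

variable {R : Type*} [CommRing R] {M : Type*} [AddCommGroup M] [Module R M]

lemma ctr_ιMulti' (φ : Module.Dual R M) (n : ℕ) (v : Fin (n + 1) → M) :
    ctr φ (ExteriorAlgebra.ιMulti R (n + 1) v) =
      ∑ j : Fin (n + 1), ((-1 : R) ^ (j : ℕ) * φ (v j)) •
        ExteriorAlgebra.ιMulti R n (fun l => v (j.succAbove l)) := by
  rw [ctr_ιMulti]
  refine Finset.sum_congr rfl fun j _ => ?_
  rw [mul_smul, ← Int.cast_smul_eq_zsmul R]
  push_cast
  rfl

lemma ctr_ιMulti_comp_zero (φ : Module.Dual R M) {M' : Type*} [AddCommGroup M'] [Module R M']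
    (f : M' →ₗ[R] M) (hφf : ∀ y, φ (f y) = 0) (n : ℕ) (b : Fin n → M') :
    ctr φ (ExteriorAlgebra.ιMulti R n (fun i => f (b i))) = 0 := by
  cases n with
  | zero => rw [ExteriorAlgebra.ιMulti_zero_apply, ctr_one]
  | succ n =>
      rw [ctr_ιMulti']
      exact Finset.sum_eq_zero fun k _ => by rw [hφf, mul_zero, zero_smul]

lemma homotopy (φ : Module.Dual R M) (e : M) (he : φ e = 1)
    (P : ExteriorAlgebra R M →ₐ[R] ExteriorAlgebra R M)
    (hP : ∀ w : M, P (ExteriorAlgebra.ι R w)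
      = ExteriorAlgebra.ι R w - φ w • ExteriorAlgebra.ι R e)
    (x : ExteriorAlgebra R M) :
    x = P x + ExteriorAlgebra.ι R e * P (ctr φ x) := by
  have key : ∀ a y : ExteriorAlgebra R M,
      P (a * y) + ExteriorAlgebra.ι R e * P (ctr φ (a * y))
        = a * (P y + ExteriorAlgebra.ι R e * P (ctr φ y)) := by
    intro a
    induction a using ExteriorAlgebra.induction with
    | algebraMap r =>
        intro y
        have h1 : algebraMap R (ExteriorAlgebra R M) r * y = r • y := (Algebra.smul_def r y).symm
        rw [h1]
        simp only [map_smul]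
        rw [mul_smul_comm, ← smul_add, ← Algebra.smul_def]
    | ι w =>
        intro y
        have hac : ExteriorAlgebra.ι R e * ExteriorAlgebra.ι R w
            = -(ExteriorAlgebra.ι R w * ExteriorAlgebra.ι R e) :=
          eq_neg_of_add_eq_zero_left (ExteriorAlgebra.ι_add_mul_swap e w)
        have hsq : ExteriorAlgebra.ι R e * ExteriorAlgebra.ι R e = (0 : ExteriorAlgebra R M) :=
          ExteriorAlgebra.ι_sq_zero e
        have hEEB : ∀ B : ExteriorAlgebra R M,
            ExteriorAlgebra.ι R e * (ExteriorAlgebra.ι R e * B) = 0 := by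
          intro B; rw [← mul_assoc, hsq, zero_mul]
        have hEWB : ∀ B : ExteriorAlgebra R M,
            ExteriorAlgebra.ι R e * (ExteriorAlgebra.ι R w * B)
              = -(ExteriorAlgebra.ι R w * (ExteriorAlgebra.ι R e * B)) := by
          intro B; rw [← mul_assoc, hac, neg_mul, mul_assoc]
        rw [ctr_ι_mul, map_mul, map_sub, map_smul, map_mul, hP w]
        simp only [mul_sub, sub_mul, mul_add, add_mul, smul_mul_assoc, mul_smul_comm, mul_assoc]
        simp only [hEWB, hEEB, smul_zero, sub_zero]
        abel
    | mul a b ha hb =>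
        intro y
        rw [mul_assoc, ha (b * y), hb y, ← mul_assoc]
    | add a b ha hb =>
        intro y
        rw [add_mul]
        simp only [map_add]
        rw [mul_add (ExteriorAlgebra.ι R e), add_mul a b]
        rw [← ha y, ← hb y]
        abel
  have h := key x 1
  rw [mul_one, map_one, ctr_one, map_zero, mul_zero, add_zero, mul_one] at h
  exact h.symm

lemma exteriorPower_induction {n : ℕ} {C : (⋀[R]^n M) → Prop}
    (h0 : C 0)
    (hw : ∀ v : Fin n → M,
      C ⟨ExteriorAlgebra.ιMulti R n v, ExteriorAlgebra.ιMulti_range R n (Set.mem_range_self _)⟩)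
    (hsmul : ∀ (r : R) (x : ⋀[R]^n M), C x → C (r • x))
    (hadd : ∀ x y : ⋀[R]^n M, C x → C y → C (x + y)) (x : ⋀[R]^n M) : C x := by
  obtain ⟨xv, hx⟩ := x
  have hspan : ∀ y : ExteriorAlgebra R M,
      y ∈ Submodule.span R (Set.range (ExteriorAlgebra.ιMulti R n (M := M))) →
        y ∈ ⋀[R]^n M := by
    intro y hy
    rw [← ExteriorAlgebra.ιMulti_span_fixedDegree] at *
    exact hy
  have hx' : xv ∈ Submodule.span R (Set.range (ExteriorAlgebra.ιMulti R n (M := M))) := by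
    rw [ExteriorAlgebra.ιMulti_span_fixedDegree]
    exact hx
  refine Submodule.span_induction
    (p := fun y _ => ∀ (hm : y ∈ ⋀[R]^n M), C ⟨y, hm⟩) ?_ ?_ ?_ ?_ hx' hx
  · rintro y ⟨v, rfl⟩ hm
    exact hw v
  · intro hm
    exact h0
  · intro y z hy hz hcy hcz hm
    exact hadd _ _ (hcy (hspan y hy)) (hcz (hspan z hz))
  · intro r y hy hcy hm
    exact hsmul r _ (hcy (hspan y hy))

end Stmt11Aux

lemma extPowerMap_val {R : Type*} [CommRing R] {M N : Type*} [AddCommGroup M]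
    [Module R M] [AddCommGroup N] [Module R N] (n : ℕ) (f : M →ₗ[R] N) (x : ⋀[R]^n M) :
    ((extPowerMap n f x : ExteriorAlgebra R N)) = ExteriorAlgebra.map f (x : ExteriorAlgebra R M) :=
  rfl

set_option maxHeartbeats 1000000 in
/-- Given a split short exact sequence `0 → M' → M → L → 0` of `R`-modules with `L` free of
rank one, for every `i = m + 1 ≥ 1` there is an exact sequence
`0 → Λ^i M' → Λ^i M → L ⊗ Λ^{i−1} M' → 0`, where the surjection sends
`m₁ ∧ ... ∧ m_i` to `Σ_j (−1)^{i−j} π(m_j) ⊗ (m₁ ∧ ... ∧ m̂_j ∧ ... ∧ m_i)` computed via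
any splitting (and is independent of the choice of splitting). -/
theorem stmt_11 {R M M' L : Type*} [CommRing R]
    [AddCommGroup M] [Module R M] [AddCommGroup M'] [Module R M']
    [AddCommGroup L] [Module R L]
    (bL : Module.Basis (Fin 1) R L)
    (f : M' →ₗ[R] M) (π : M →ₗ[R] L)
    (hf : Function.Injective f) (hπ : Function.Surjective π)
    (hexact : Function.Exact f π)
    (hsplit : ∃ s : L →ₗ[R] M, π ∘ₗ s = LinearMap.id)
    (m : ℕ) :
    ∃ g : ⋀[R]^(m + 1) M →ₗ[R] L ⊗[R] ⋀[R]^m M',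
      (∀ (s : L →ₗ[R] M) (ρ : M →ₗ[R] M'),
          π ∘ₗ s = LinearMap.id →
          (∀ x : M, f (ρ x) = x - s (π x)) →
          ∀ v : Fin (m + 1) → M,
            g (wedge R (m + 1) v)
              = ∑ j : Fin (m + 1),
                  ((-1 : ℤ) ^ (m - (j : ℕ))) •
                    (π (v j) ⊗ₜ[R] wedge R m (fun l => ρ (v (j.succAbove l))))) ∧
      Function.Injective (extPowerMap (m + 1) f) ∧
      Function.Exact (extPowerMap (m + 1) f) g ∧
      Function.Surjective g := by
  classical
  obtain ⟨s₀, hs₀⟩ := hsplit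
  have hπs₀ : ∀ l, π (s₀ l) = l := fun l => LinearMap.congr_fun hs₀ l
  have hπf : ∀ y : M', π (f y) = 0 := fun y => hexact.apply_apply_eq_zero y
  set φ : Module.Dual R M := bL.coord 0 ∘ₗ π with hφ
  have hφf : ∀ y : M', φ (f y) = 0 := by intro y; simp [hφ, hπf y]
  have hcoord : ∀ l : L, bL.coord 0 l • bL 0 = l := by
    intro l
    have h := bL.sum_repr l
    rw [Fin.sum_univ_one] at h
    simpa [Module.Basis.coord_apply] using h
  have hcoord1 : bL.coord 0 (bL 0) = 1 := by simp
  -- the retraction ρ₀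
  have hmem : ∀ x : M, (LinearMap.id (R := R) (M := M) - s₀ ∘ₗ π) x ∈ LinearMap.range f := by
    intro x
    rw [← LinearMap.exact_iff.mp hexact]
    simp [hπs₀]
  set ρ₀ : M →ₗ[R] M' :=
    (LinearEquiv.ofInjective f hf).symm.toLinearMap ∘ₗ
      (LinearMap.id (R := R) (M := M) - s₀ ∘ₗ π).codRestrict (LinearMap.range f) hmem with hρ₀def
  have hfsymm : ∀ z : LinearMap.range f,
      f ((LinearEquiv.ofInjective f hf).symm z) = (z : M) := by
    intro z
    have h2 := congrArg Subtype.val ((LinearEquiv.ofInjective f hf).apply_symm_apply z)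
    rwa [LinearEquiv.ofInjective_apply] at h2
  have hρ₀ : ∀ x : M, f (ρ₀ x) = x - s₀ (π x) := by
    intro x
    have h2 := hfsymm (((LinearMap.id (R := R) (M := M) - s₀ ∘ₗ π).codRestrict (LinearMap.range f) hmem) x)
    rw [LinearMap.codRestrict_apply] at h2
    have h3 : ρ₀ x = (LinearEquiv.ofInjective f hf).symm
        (((LinearMap.id (R := R) (M := M) - s₀ ∘ₗ π).codRestrict (LinearMap.range f) hmem) x) := rfl
    rw [h3, h2]
    simp
  have hρ₀f : ∀ y : M', ρ₀ (f y) = y := by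
    intro y
    apply hf
    rw [hρ₀, hπf y, map_zero, sub_zero]
  set e₀ : M := s₀ (bL 0) with he₀
  have hφe₀ : φ e₀ = 1 := by simp [hφ, he₀, hπs₀]
  -- the map g
  set cmap : (⋀[R]^(m+1) M) →ₗ[R] (⋀[R]^m M) :=
    (Stmt11Aux.ctr φ).restrict (Stmt11Aux.ctr_mem φ m) with hcmap
  set G : (⋀[R]^(m+1) M) →ₗ[R] L ⊗[R] (⋀[R]^m M') :=
    ((-1 : R)^m) • ((TensorProduct.mk R L (⋀[R]^m M') (bL 0)) ∘ₗ (extPowerMap m ρ₀) ∘ₗ cmap)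
    with hGdef
  have hcmapval : ∀ x : ⋀[R]^(m+1) M,
      ((cmap x : ExteriorAlgebra R M)) = Stmt11Aux.ctr φ (x : ExteriorAlgebra R M) := fun x => rfl
  have hGx : ∀ x : ⋀[R]^(m+1) M,
      G x = ((-1 : R)^m) • (bL 0 ⊗ₜ[R] (extPowerMap m ρ₀ (cmap x))) := fun x => rfl
  have hsignm : ((-1 : R)^m) * ((-1 : R)^m) = 1 := by
    rw [← pow_add]
    exact Even.neg_one_pow ⟨m, rfl⟩
  refine ⟨G, ?_, ?_, ?_, ?_⟩
  · -- the formula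
    intro s ρ hs hρ v
    have hπs : ∀ l, π (s l) = l := fun l => LinearMap.congr_fun hs l
    have hφs : ∀ l, φ (s l) = bL.coord 0 l := by intro l; simp [hφ, hπs]
    have hv : ∀ i, v i = f (ρ (v i)) + φ (v i) • s (bL 0) := by
      intro i
      have h1 : s (π (v i)) = φ (v i) • s (bL 0) := by
        conv_lhs => rw [← hcoord (π (v i))]
        rw [map_smul]
        rfl
      rw [hρ (v i), h1, sub_add_cancel]
    have hexp0 := Stmt11Aux.alt_expand (ExteriorAlgebra.ιMulti R (m+1))
      (fun i => f (ρ (v i))) (fun i => φ (v i)) (s (bL 0))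
    have hexp : ExteriorAlgebra.ιMulti R (m+1) v
        = ExteriorAlgebra.ιMulti R (m+1) (fun i => f (ρ (v i)))
          + ∑ j : Fin (m+1), φ (v j) •
              ExteriorAlgebra.ιMulti R (m+1)
                (Function.update (fun i => f (ρ (v i))) j (s (bL 0))) := by
      rw [← hexp0]
      exact congrArg _ (funext hv)
    have hφes : φ (s (bL 0)) = 1 := by rw [hφs, hcoord1]
    have hupd : ∀ j : Fin (m+1), Stmt11Aux.ctr φ (ExteriorAlgebra.ιMulti R (m+1)
        (Function.update (fun i => f (ρ (v i))) j (s (bL 0))))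
        = ((-1 : R)^(j : ℕ)) •
            ExteriorAlgebra.ιMulti R m (fun l => f (ρ (v (j.succAbove l)))) := by
      intro j
      rw [Stmt11Aux.ctr_ιMulti']
      rw [Finset.sum_eq_single j]
      · rw [Function.update_self, hφes, mul_one]
        refine congrArg _ (congrArg _ (funext fun l => ?_))
        exact Function.update_of_ne (Fin.succAbove_ne j l) _ _
      · intro k _ hk
        rw [Function.update_of_ne hk, hφf, mul_zero, zero_smul]
      · intro h; exact absurd (Finset.mem_univ j) h
    have h1 : Stmt11Aux.ctr φ (ExteriorAlgebra.ιMulti R (m+1) (fun i => f (ρ (v i)))) = 0 :=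
      Stmt11Aux.ctr_ιMulti_comp_zero φ f hφf (m+1) (fun i => ρ (v i))
    have hctr : Stmt11Aux.ctr φ (ExteriorAlgebra.ιMulti R (m+1) v)
        = ∑ j : Fin (m+1), (φ (v j) * ((-1 : R)^(j : ℕ))) •
            ExteriorAlgebra.ιMulti R m (fun l => f (ρ (v (j.succAbove l)))) := by
      rw [hexp, map_add, h1, zero_add, map_sum]
      refine Finset.sum_congr rfl fun j _ => ?_
      rw [map_smul, hupd j, smul_smul]
    have hW : extPowerMap m ρ₀ (cmap (wedge R (m+1) v))
        = ∑ j : Fin (m+1), (φ (v j) * ((-1 : R)^(j : ℕ))) •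
            wedge R m (fun l => ρ (v (j.succAbove l))) := by
      apply Subtype.ext
      rw [extPowerMap_val, hcmapval]
      show ExteriorAlgebra.map ρ₀ (Stmt11Aux.ctr φ (ExteriorAlgebra.ιMulti R (m+1) v)) = _
      rw [hctr, map_sum]
      rw [Submodule.coe_sum]
      refine Finset.sum_congr rfl fun j _ => ?_
      rw [map_smul, ExteriorAlgebra.map_apply_ιMulti, SetLike.val_smul]
      refine congrArg _ (congrArg _ (funext fun l => ?_))
      show ρ₀ (f (ρ (v (j.succAbove l)))) = _
      rw [hρ₀f]
    rw [hGx, hW, TensorProduct.tmul_sum, Finset.smul_sum]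
    refine Finset.sum_congr rfl fun j _ => ?_
    have hπv : π (v j) = φ (v j) • bL 0 := by
      rw [← hcoord (π (v j))]
      rfl
    rw [TensorProduct.tmul_smul, smul_smul]
    rw [← Int.cast_smul_eq_zsmul R ((-1 : ℤ) ^ (m - (j : ℕ))), hπv,
      ← TensorProduct.smul_tmul', smul_smul]
    congr 1
    push_cast
    have hj : (j : ℕ) ≤ m := Fin.is_le j
    have hme : m + (j : ℕ) = (m - (j : ℕ)) + 2 * (j : ℕ) := by omega
    have hsign : ((-1 : R)^m) * ((-1 : R)^(j : ℕ)) = (-1 : R)^(m - (j : ℕ)) := by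
      rw [← pow_add, hme, pow_add, pow_mul]
      norm_num
    rw [← hsign]
    ring
  · -- injectivity
    have hinv : ∀ x : ⋀[R]^(m+1) M', extPowerMap (m+1) ρ₀ (extPowerMap (m+1) f x) = x := by
      intro x
      apply Subtype.ext
      rw [extPowerMap_val, extPowerMap_val]
      rw [← AlgHom.comp_apply, ExteriorAlgebra.map_comp_map]
      have hid : ρ₀ ∘ₗ f = LinearMap.id := by ext y; simp [hρ₀f]
      rw [hid, ExteriorAlgebra.map_id]
      rfl
    intro x y hxy
    rw [← hinv x, hxy, hinv y]
  · -- exactness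
    rw [LinearMap.exact_iff]
    apply le_antisymm
    · -- ker ⊆ range
      intro x hx
      rw [LinearMap.mem_ker] at hx
      rw [hGx] at hx
      have h2 : bL 0 ⊗ₜ[R] extPowerMap m ρ₀ (cmap x) = 0 := by
        have h3 := congrArg (fun z => ((-1 : R)^m) • z) hx
        simpa [smul_smul, hsignm] using h3
      have h4 : extPowerMap m ρ₀ (cmap x) = 0 := by
        have h5 := congrArg
          (TensorProduct.lift ((LinearMap.lsmul R (⋀[R]^m M')) ∘ₗ (bL.coord 0))) h2
        rw [TensorProduct.lift.tmul, LinearMap.comp_apply, LinearMap.lsmul_apply,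
          hcoord1, one_smul,
          map_zero (TensorProduct.lift ((LinearMap.lsmul R (⋀[R]^m M')) ∘ₗ (bL.coord 0)))] at h5
        exact h5
      have h6 : ExteriorAlgebra.map ρ₀ (Stmt11Aux.ctr φ (x : ExteriorAlgebra R M)) = 0 := by
        have := congrArg Subtype.val h4
        rwa [extPowerMap_val, hcmapval] at this
      have hPι : ∀ w : M, ExteriorAlgebra.map (f ∘ₗ ρ₀) (ExteriorAlgebra.ι R w)
          = ExteriorAlgebra.ι R w - φ w • ExteriorAlgebra.ι R e₀ := by
        intro w
        rw [ExteriorAlgebra.map_apply_ι]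
        show ExteriorAlgebra.ι R (f (ρ₀ w)) = _
        rw [hρ₀ w]
        have h7 : s₀ (π w) = φ w • e₀ := by
          conv_lhs => rw [← hcoord (π w)]
          rw [map_smul]
          rfl
        rw [h7, map_sub, map_smul]
      have hhom := Stmt11Aux.homotopy φ e₀ hφe₀ (ExteriorAlgebra.map (f ∘ₗ ρ₀)) hPι
        (x : ExteriorAlgebra R M)
      have h8 : ExteriorAlgebra.map (f ∘ₗ ρ₀) (Stmt11Aux.ctr φ (x : ExteriorAlgebra R M)) = 0 := by
        rw [← ExteriorAlgebra.map_comp_map, AlgHom.comp_apply, h6, map_zero]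
      rw [h8, mul_zero, add_zero] at hhom
      refine ⟨extPowerMap (m+1) ρ₀ x, ?_⟩
      apply Subtype.ext
      rw [extPowerMap_val, extPowerMap_val, ← AlgHom.comp_apply, ExteriorAlgebra.map_comp_map]
      exact hhom.symm
    · -- range ⊆ ker
      rintro _ ⟨y, rfl⟩
      rw [LinearMap.mem_ker]
      induction y using Stmt11Aux.exteriorPower_induction with
      | h0 => rw [map_zero (extPowerMap (m+1) f), map_zero G]
      | hw b =>
          rw [hGx]
          have hc0 : cmap (extPowerMap (m+1) f
              ⟨ExteriorAlgebra.ιMulti R (m+1) b,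
                ExteriorAlgebra.ιMulti_range R (m+1) (Set.mem_range_self _)⟩) = 0 := by
            apply Subtype.ext
            rw [hcmapval, extPowerMap_val]
            rw [ExteriorAlgebra.map_apply_ιMulti]
            have : (f ∘ b) = fun i => f (b i) := rfl
            rw [this, Stmt11Aux.ctr_ιMulti_comp_zero φ f hφf (m+1) b]
            rfl
          rw [hc0, map_zero (extPowerMap m ρ₀), TensorProduct.tmul_zero, smul_zero]
      | hsmul r x hx => rw [map_smul (extPowerMap (m+1) f), map_smul G, hx, smul_zero]
      | hadd x y hx hy => rw [map_add (extPowerMap (m+1) f), map_add G, hx, hy, add_zero]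
  · -- surjectivity
    have hr : ∀ w : ⋀[R]^m M', ∃ x, G x = bL 0 ⊗ₜ[R] w := by
      intro w
      induction w using Stmt11Aux.exteriorPower_induction with
      | h0 => exact ⟨0, by rw [map_zero, TensorProduct.tmul_zero]⟩
      | hw b =>
          have hmemx : ExteriorAlgebra.ι R e₀ *
              ExteriorAlgebra.ιMulti R m (fun i => f (b i)) ∈ ⋀[R]^(m+1) M := by
            show _ ∈ LinearMap.range (ExteriorAlgebra.ι R (M := M)) ^ (m+1)
            rw [pow_succ']
            exact Submodule.mul_mem_mul ⟨e₀, rfl⟩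
              (ExteriorAlgebra.ιMulti_range R m (Set.mem_range_self _))
          set x' : ⋀[R]^(m+1) M := ⟨_, hmemx⟩ with hx'
          have hcx' : Stmt11Aux.ctr φ (x' : ExteriorAlgebra R M)
              = ExteriorAlgebra.ιMulti R m (fun i => f (b i)) := by
            show Stmt11Aux.ctr φ (ExteriorAlgebra.ι R e₀ * _) = _
            rw [Stmt11Aux.ctr_ι_mul, Stmt11Aux.ctr_ιMulti_comp_zero φ f hφf m b,
              mul_zero, sub_zero, hφe₀, one_smul]
          have hWx' : extPowerMap m ρ₀ (cmap x')
              = ⟨ExteriorAlgebra.ιMulti R m b,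
                  ExteriorAlgebra.ιMulti_range R m (Set.mem_range_self _)⟩ := by
            apply Subtype.ext
            rw [extPowerMap_val, hcmapval, hcx', ExteriorAlgebra.map_apply_ιMulti]
            show ExteriorAlgebra.ιMulti R m (fun i => ρ₀ (f (b i))) = _
            refine congrArg _ (funext fun i => ?_)
            rw [hρ₀f]
          refine ⟨((-1 : R)^m) • x', ?_⟩
          rw [map_smul, hGx, hWx', smul_smul, hsignm, one_smul]
      | hsmul r x hx =>
          obtain ⟨y, hy⟩ := hx
          exact ⟨r • y, by rw [map_smul, hy, TensorProduct.tmul_smul]⟩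
      | hadd x y hx hy =>
          obtain ⟨a, ha⟩ := hx
          obtain ⟨c, hc⟩ := hy
          exact ⟨a + c, by rw [map_add, ha, hc, TensorProduct.tmul_add]⟩
    intro z
    induction z using TensorProduct.induction_on with
    | zero => exact ⟨0, map_zero G⟩
    | tmul l w =>
        obtain ⟨x, hx⟩ := hr w
        refine ⟨bL.coord 0 l • x, ?_⟩
        rw [map_smul, hx, TensorProduct.smul_tmul', hcoord]
    | add a b ha hb =>
        obtain ⟨x, hx⟩ := ha
        obtain ⟨y, hy⟩ := hb
        exact ⟨x + y, by rw [map_add, hx, hy]⟩
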